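/- Let ε_1 > ε_2 > … > ε_l > 0 be real numbers and let W̄ = z_2 + z_1·∏_{i=1}^{l}(1 + T^{−ε_i}·z_2) over Λ. Then for each i = 1,…,l, the critical point α_i = ( −T^{ε_i}·∏_{j≠i}(1 − T^{ε_i − ε_j})^{−1}, −T^{ε_i} ) of W̄ satisfies (val(α_{i,1}), val(α_{i,2})) = ( ε_i + Σ_{j=1}^{i−1}(ε_j − ε_i), ε_i ). -/
import Mathlib

open Finset MvPolynomial

noncomputable section

/-- The Novikov field `Λ` over `ℂ`, modelled as the field of Hahn series over `ℂ`
with value group `ℝ`. -/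
abbrev Novikov : Type := HahnSeries ℝ ℂ

/-- The monomial `T^r` with coefficient `1` and exponent `r`. -/
def Tpow (r : ℝ) : Novikov := HahnSeries.single r 1

/-- The valuation `val x ∈ ℝ` of `x ∈ Λ`: the smallest exponent occurring in `x`
(junk value `0` at `x = 0`). -/
def nval (x : Novikov) : ℝ := x.order

/-- `z` is a critical point of the two-variable polynomial `W` in `(Λ^×)²`: both
coordinates of `z` are nonzero and both partial derivatives of `W` vanish at `z`. -/
def PIsCritPt (W : MvPolynomial (Fin 2) Novikov) (z : Fin 2 → Novikov) : Prop :=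
  (∀ i, z i ≠ 0) ∧ ∀ i : Fin 2, eval z (pderiv i W) = 0

/-- `z` is a nondegenerate critical point of `W`: a critical point at which the determinant
of the Hessian matrix `(∂²W/∂z_i∂z_j)(z)` is nonzero. -/
def PIsNondegCritPt (W : MvPolynomial (Fin 2) Novikov) (z : Fin 2 → Novikov) : Prop :=
  PIsCritPt W z ∧
    (Matrix.of fun i j : Fin 2 => eval z (pderiv i (pderiv j W))).det ≠ 0

/-- The local model `W̄ = z₂ + z₁ ∏_{i=1}^{l} (1 + T^{-ε_i} z₂)` of the mirror potential near
a corner of the moment polytope after `l` non-toric blowups of sizes `ε_1, …, ε_l`. -/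
def Wbar (l : ℕ) (ε : Fin l → ℝ) : MvPolynomial (Fin 2) Novikov :=
  X 1 + X 0 * ∏ i, (1 + C (Tpow (-ε i)) * X 1)

/-- The critical point of `W̄` associated with the `i`-th blowup:
`α_i = (-T^{ε_i} ∏_{j ≠ i} (1 - T^{ε_i - ε_j})⁻¹, -T^{ε_i})`. -/
def alphPt (l : ℕ) (ε : Fin l → ℝ) (i : Fin l) : Fin 2 → Novikov :=
  ![-(Tpow (ε i)) * ∏ j ∈ Finset.univ.erase i, (1 - Tpow (ε i - ε j))⁻¹, -(Tpow (ε i))]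

lemma Tpow_ne_zero (r : ℝ) : Tpow r ≠ 0 := HahnSeries.single_ne_zero one_ne_zero

lemma order_Tpow (r : ℝ) : (Tpow r).order = r := HahnSeries.order_single one_ne_zero

lemma Tpow_mul (r s : ℝ) : Tpow r * Tpow s = Tpow (r + s) := by
  simp [Tpow, HahnSeries.single_mul_single]

lemma Tpow_zero : Tpow 0 = 1 := HahnSeries.single_zero_one

lemma one_sub_Tpow_ne_zero {a : ℝ} (ha : a ≠ 0) : (1 : Novikov) - Tpow a ≠ 0 := by
  intro h
  apply ha
  have h1 : Tpow a = 1 := by linear_combination -h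
  calc a = (Tpow a).order := (order_Tpow a).symm
    _ = 0 := by rw [h1, HahnSeries.order_one]

lemma order_one_sub_Tpow {a : ℝ} (ha : a ≠ 0) : ((1 : Novikov) - Tpow a).order = min 0 a := by
  set v := HahnSeries.addVal ℝ ℂ with hv
  have h1 : v 1 = ((0 : ℝ) : WithTop ℝ) := by
    rw [HahnSeries.addVal_apply_of_ne one_ne_zero, HahnSeries.order_one]
  have h2 : v (-(Tpow a)) = ((a : ℝ) : WithTop ℝ) := by
    rw [HahnSeries.addVal_apply_of_ne (neg_ne_zero.2 (Tpow_ne_zero a)),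
      HahnSeries.order_neg, order_Tpow]
  have hne : v 1 ≠ v (-(Tpow a)) := by
    rw [h1, h2]
    exact_mod_cast ha.symm
  have h3 : v (1 + -(Tpow a)) = min (v 1) (v (-(Tpow a))) :=
    AddValuation.map_add_of_distinct_val v hne
  rw [h1, h2, ← WithTop.coe_min] at h3
  have h4 : v ((1 : Novikov) - Tpow a) = (((1 : Novikov) - Tpow a).order : WithTop ℝ) :=
    HahnSeries.addVal_apply_of_ne (one_sub_Tpow_ne_zero ha)
  rw [sub_eq_add_neg, h3] at h4
  exact_mod_cast h4.symm

lemma order_inv {x : Novikov} (hx : x ≠ 0) : (x⁻¹).order = -x.order := by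
  have h := HahnSeries.order_mul hx (inv_ne_zero hx)
  rw [mul_inv_cancel₀ hx, HahnSeries.order_one] at h
  linarith

lemma order_prod {ι : Type*} (s : Finset ι) (f : ι → Novikov) (h : ∀ j ∈ s, f j ≠ 0) :
    (∏ j ∈ s, f j).order = ∑ j ∈ s, (f j).order := by
  induction s using Finset.cons_induction with
  | empty => simp [HahnSeries.order_one]
  | cons a t ha ih =>
    rw [Finset.prod_cons, Finset.sum_cons,
      HahnSeries.order_mul (h a (Finset.mem_cons_self a t))
        (Finset.prod_ne_zero_iff.2 fun j hj => h j (Finset.mem_cons_of_mem hj)),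
      ih fun j hj => h j (Finset.mem_cons_of_mem hj)]

set_option maxHeartbeats 1000000 in
set_option synthInstance.maxHeartbeats 200000 in
/-- The valuation computation of Section 5.5 of the paper: for `ε_1 > ε_2 > ⋯ > ε_l > 0`,
the critical point `α_i = (-T^{ε_i} ∏_{j ≠ i} (1 - T^{ε_i - ε_j})⁻¹, -T^{ε_i})` of
`W̄ = z₂ + z₁ ∏_{i=1}^{l} (1 + T^{-ε_i} z₂)` satisfies
`(val α_{i,1}, val α_{i,2}) = (ε_i + ∑_{j<i} (ε_j - ε_i), ε_i)`. -/
theorem nontoric_critical_point_valuations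
    (l : ℕ) (ε : Fin l → ℝ) (hanti : StrictAnti ε) (hpos : ∀ i, 0 < ε i) (i : Fin l) :
    PIsCritPt (Wbar l ε) (alphPt l ε i) ∧
    nval (alphPt l ε i 0) = ε i + ∑ j ∈ Finset.univ.filter (fun j => j < i), (ε j - ε i) ∧
    nval (alphPt l ε i 1) = ε i := by
  classical
  set z := alphPt l ε i with hz
  have hz1 : z 1 = -(Tpow (ε i)) := rfl
  have hz0 : z 0 = -(Tpow (ε i)) * ∏ j ∈ Finset.univ.erase i, (1 - Tpow (ε i - ε j))⁻¹ := rfl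
  have hsubne : ∀ j ∈ Finset.univ.erase i, ε i - ε j ≠ 0 := by
    intro j hj
    exact sub_ne_zero.2 fun h => (Finset.ne_of_mem_erase hj) (hanti.injective h.symm)
  have hcne : ∀ j ∈ Finset.univ.erase i, (1 : Novikov) - Tpow (ε i - ε j) ≠ 0 :=
    fun j hj => one_sub_Tpow_ne_zero (hsubne j hj)
  have hz1ne : z 1 ≠ 0 := neg_ne_zero.2 (Tpow_ne_zero _)
  have hz0ne : z 0 ≠ 0 := by
    rw [hz0]
    exact mul_ne_zero (neg_ne_zero.2 (Tpow_ne_zero _))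
      (Finset.prod_ne_zero_iff.2 fun j hj => inv_ne_zero (hcne j hj))
  have heval : ∀ j : Fin l, eval z (1 + C (Tpow (-ε j)) * X 1) = 1 - Tpow (ε i - ε j) := by
    intro j
    rw [eval_add, eval_mul, eval_C, eval_X, map_one, hz1]
    have hT : Tpow (-ε j) * Tpow (ε i) = Tpow (ε i - ε j) := by
      rw [Tpow_mul]; ring_nf
    linear_combination -hT
  have hevi : eval z (1 + C (Tpow (-ε i)) * X 1) = 0 := by
    rw [heval i, sub_self, Tpow_zero, sub_self]
  have hsplit : (∏ j : Fin l, (1 + C (Tpow (-ε j)) * X 1) : MvPolynomial (Fin 2) Novikov)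
      = (1 + C (Tpow (-ε i)) * X 1) * ∏ j ∈ Finset.univ.erase i, (1 + C (Tpow (-ε j)) * X 1) :=
    (Finset.mul_prod_erase _ _ (Finset.mem_univ i)).symm
  have hQ : eval z (∏ j ∈ Finset.univ.erase i, (1 + C (Tpow (-ε j)) * X 1))
      = ∏ j ∈ Finset.univ.erase i, (1 - Tpow (ε i - ε j)) := by
    rw [eval_prod]
    exact Finset.prod_congr rfl fun j _ => heval j
  refine ⟨⟨?_, ?_⟩, ?_, ?_⟩
  · intro k
    fin_cases k
    · exact hz0ne
    · exact hz1ne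
  · intro k
    fin_cases k
    · show eval z (pderiv 0 (Wbar l ε)) = 0
      have hP0 : ∀ (s : Finset (Fin l)), pderiv (0 : Fin 2)
          (∏ j ∈ s, ((1 + C (Tpow (-ε j)) * X 1) : MvPolynomial (Fin 2) Novikov)) = 0 := by
        intro s
        induction s using Finset.cons_induction with
        | empty => simp
        | cons a t ha ih =>
          rw [Finset.prod_cons, pderiv_mul, ih, mul_zero, add_zero]
          have h1 : pderiv (0 : Fin 2)
              ((1 + C (Tpow (-ε a)) * X 1) : MvPolynomial (Fin 2) Novikov) = 0 := by
            rw [map_add, pderiv_one, pderiv_C_mul, pderiv_X_of_ne (by decide : (1:Fin 2) ≠ 0)]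
            ring
          rw [h1, zero_mul]
      have hdW0 : pderiv (0 : Fin 2) (Wbar l ε)
          = ∏ j : Fin l, ((1 + C (Tpow (-ε j)) * X 1) : MvPolynomial (Fin 2) Novikov) := by
        rw [Wbar, map_add, pderiv_mul, pderiv_X_of_ne (by decide : (1:Fin 2) ≠ 0),
          pderiv_X_self, hP0 Finset.univ, mul_zero, add_zero, zero_add, one_mul]
      rw [hdW0, hsplit, eval_mul, hevi, zero_mul]
    · show eval z (pderiv 1 (Wbar l ε)) = 0
      have hfi : pderiv (1 : Fin 2)
          ((1 + C (Tpow (-ε i)) * X 1) : MvPolynomial (Fin 2) Novikov) = C (Tpow (-ε i)) := by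
        rw [map_add, pderiv_one, pderiv_C_mul, pderiv_X_self, mul_one, zero_add]
      have hdW1 : pderiv (1 : Fin 2) (Wbar l ε)
          = 1 + X 0 * (C (Tpow (-ε i)) * ∏ j ∈ Finset.univ.erase i, (1 + C (Tpow (-ε j)) * X 1)
            + (1 + C (Tpow (-ε i)) * X 1)
              * pderiv 1 (∏ j ∈ Finset.univ.erase i, (1 + C (Tpow (-ε j)) * X 1))) := by
        rw [Wbar, map_add, pderiv_mul, pderiv_X_self, pderiv_X_of_ne (by decide : (0:Fin 2) ≠ 1),
          zero_mul, zero_add, hsplit, pderiv_mul, hfi]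
      rw [hdW1, eval_add, eval_mul, eval_add, eval_mul, eval_mul, eval_C, eval_X, map_one,
        hevi, zero_mul, add_zero, hQ]
      have key : (∏ j ∈ Finset.univ.erase i, ((1:Novikov) - Tpow (ε i - ε j))⁻¹)
          * (∏ j ∈ Finset.univ.erase i, ((1:Novikov) - Tpow (ε i - ε j))) = 1 := by
        rw [← Finset.prod_mul_distrib]
        exact Finset.prod_eq_one fun j hj => inv_mul_cancel₀ (hcne j hj)
      have key2 : Tpow (ε i) * Tpow (-ε i) = 1 := by
        rw [Tpow_mul]; simp [Tpow_zero]
      rw [hz0]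
      linear_combination (-(Tpow (ε i) * Tpow (-ε i))) * key - key2
  · show (z 0).order = _
    rw [hz0, HahnSeries.order_mul (neg_ne_zero.2 (Tpow_ne_zero _))
      (Finset.prod_ne_zero_iff.2 fun j hj => inv_ne_zero (hcne j hj)),
      HahnSeries.order_neg, order_Tpow,
      order_prod _ _ (fun j hj => inv_ne_zero (hcne j hj))]
    congr 1
    have hc : ∀ j ∈ Finset.univ.erase i, (((1 : Novikov) - Tpow (ε i - ε j))⁻¹).order
        = -(min 0 (ε i - ε j)) := by
      intro j hj
      rw [order_inv (hcne j hj), order_one_sub_Tpow (hsubne j hj)]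
    rw [Finset.sum_congr rfl hc]
    have hsub : Finset.univ.filter (fun j => j < i) ⊆ Finset.univ.erase i := by
      intro j hj
      simp only [Finset.mem_filter, Finset.mem_univ, true_and] at hj
      exact Finset.mem_erase.2 ⟨ne_of_lt hj, Finset.mem_univ j⟩
    rw [← Finset.sum_subset hsub]
    · refine Finset.sum_congr rfl fun j hj => ?_
      simp only [Finset.mem_filter, Finset.mem_univ, true_and] at hj
      have hlt : ε i - ε j < 0 := sub_neg.2 (hanti hj)
      rw [min_eq_right hlt.le]
      ring
    · intro j hj hnj
      simp only [Finset.mem_filter, Finset.mem_univ, true_and] at hnj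
      have hji : i < j := by
        rcases lt_trichotomy j i with h | h | h
        · exact absurd h hnj
        · exact absurd h (Finset.ne_of_mem_erase hj)
        · exact h
      have hgt : (0:ℝ) < ε i - ε j := sub_pos.2 (hanti hji)
      rw [min_eq_left hgt.le, neg_zero]
  · show (z 1).order = _
    rw [hz1, HahnSeries.order_neg, order_Tpow]

end
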